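/- Let (A, Δ, ε, S) be a quasitriangular Hopf algebra over ℂ with R-matrix R = Σ aᵢ ⊗ bᵢ, and define the Drinfeld element u := Σ S(bᵢ) · aᵢ ∈ A. Then u is invertible and S²(x) = u · x · u⁻¹ for all x ∈ A; in particular the square of the antipode is an inner automorphism. -/

import Mathlib

open TensorProduct

noncomputable section

variable {A : Type*} [Ring A] [Algebra ℂ A]

def tensorFlip (A : Type*) [Ring A] [Algebra ℂ A] : A ⊗[ℂ] A ≃ₐ[ℂ] A ⊗[ℂ] A :=
  Algebra.TensorProduct.comm ℂ A A

/-- `ε ⊗ id : A ⊗ A → A`. -/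
def epsId (A : Type*) [Ring A] [Algebra ℂ A] (ε : A →ₐ[ℂ] ℂ) : A ⊗[ℂ] A →ₐ[ℂ] A :=
  (Algebra.TensorProduct.lid ℂ A).toAlgHom.comp
    (Algebra.TensorProduct.map ε (AlgHom.id ℂ A))

/-- `id ⊗ ε : A ⊗ A → A`. -/
def idEps (A : Type*) [Ring A] [Algebra ℂ A] (ε : A →ₐ[ℂ] ℂ) : A ⊗[ℂ] A →ₐ[ℂ] A :=
  (Algebra.TensorProduct.rid ℂ ℂ A).toAlgHom.comp
    (Algebra.TensorProduct.map (AlgHom.id ℂ A) ε)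

def leg12 (A : Type*) [Ring A] [Algebra ℂ A] :
    A ⊗[ℂ] A →ₐ[ℂ] (A ⊗[ℂ] A) ⊗[ℂ] A :=
  Algebra.TensorProduct.includeLeft

def leg23 (A : Type*) [Ring A] [Algebra ℂ A] :
    A ⊗[ℂ] A →ₐ[ℂ] (A ⊗[ℂ] A) ⊗[ℂ] A :=
  ((Algebra.TensorProduct.assoc ℂ ℂ ℂ A A A).symm.toAlgHom).comp
    (Algebra.TensorProduct.includeRight)

def leg13 (A : Type*) [Ring A] [Algebra ℂ A] :
    A ⊗[ℂ] A →ₐ[ℂ] (A ⊗[ℂ] A) ⊗[ℂ] A :=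
  Algebra.TensorProduct.map
    (Algebra.TensorProduct.includeLeft : A →ₐ[ℂ] A ⊗[ℂ] A) (AlgHom.id ℂ A)

def deltaId (A : Type*) [Ring A] [Algebra ℂ A] (Δ : A →ₐ[ℂ] A ⊗[ℂ] A) :
    A ⊗[ℂ] A →ₐ[ℂ] (A ⊗[ℂ] A) ⊗[ℂ] A :=
  Algebra.TensorProduct.map Δ (AlgHom.id ℂ A)

def idDelta (A : Type*) [Ring A] [Algebra ℂ A] (Δ : A →ₐ[ℂ] A ⊗[ℂ] A) :
    A ⊗[ℂ] A →ₐ[ℂ] (A ⊗[ℂ] A) ⊗[ℂ] A :=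
  ((Algebra.TensorProduct.assoc ℂ ℂ ℂ A A A).symm.toAlgHom).comp
    (Algebra.TensorProduct.map (AlgHom.id ℂ A) Δ)

/-- The antipode axiom: `m ∘ (S ⊗ id) ∘ Δ = ε(·)1 = m ∘ (id ⊗ S) ∘ Δ`. -/
def IsAntipode (Δ : A →ₐ[ℂ] A ⊗[ℂ] A) (ε : A →ₐ[ℂ] ℂ) (S : A →ₗ[ℂ] A) : Prop :=
  (∀ a : A, LinearMap.mul' ℂ A (TensorProduct.map S LinearMap.id (Δ a)) = algebraMap ℂ A (ε a)) ∧
  (∀ a : A, LinearMap.mul' ℂ A (TensorProduct.map LinearMap.id S (Δ a)) = algebraMap ℂ A (ε a))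

section Conv
variable {C : Type*} [AddCommGroup C] [Module ℂ C]

/-- Convolution product of linear maps `C →ₗ A` w.r.t. comultiplication `δc`. -/
def conv (δc : C →ₗ[ℂ] C ⊗[ℂ] C) (f g : C →ₗ[ℂ] A) : C →ₗ[ℂ] A :=
  (LinearMap.mul' ℂ A) ∘ₗ (TensorProduct.map f g) ∘ₗ δc

lemma conv_apply (δc : C →ₗ[ℂ] C ⊗[ℂ] C) (f g : C →ₗ[ℂ] A) (c : C) :
    conv δc f g c = LinearMap.mul' ℂ A (TensorProduct.map f g (δc c)) := rfl

lemma assoc_mul_shift (f g h : C →ₗ[ℂ] A) :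
    (LinearMap.mul' ℂ A ∘ₗ TensorProduct.map (LinearMap.mul' ℂ A ∘ₗ TensorProduct.map f g) h) ∘ₗ
      (TensorProduct.assoc ℂ C C C).symm.toLinearMap =
    LinearMap.mul' ℂ A ∘ₗ TensorProduct.map f (LinearMap.mul' ℂ A ∘ₗ TensorProduct.map g h) := by
  ext c₁ c₂ c₃
  simp [mul_assoc]

lemma conv_assoc (δc : C →ₗ[ℂ] C ⊗[ℂ] C)
    (hco : ∀ c : C, (TensorProduct.map δc LinearMap.id) (δc c) =
      (TensorProduct.assoc ℂ C C C).symm ((TensorProduct.map LinearMap.id δc) (δc c)))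
    (f g h : C →ₗ[ℂ] A) :
    conv δc (conv δc f g) h = conv δc f (conv δc g h) := by
  apply LinearMap.ext; intro c
  have e1 : TensorProduct.map (conv δc f g) h =
      (TensorProduct.map (LinearMap.mul' ℂ A ∘ₗ TensorProduct.map f g) h) ∘ₗ
        (TensorProduct.map δc LinearMap.id) := by
    rw [← TensorProduct.map_comp]; rfl
  have e2 : TensorProduct.map f (conv δc g h) =
      (TensorProduct.map f (LinearMap.mul' ℂ A ∘ₗ TensorProduct.map g h)) ∘ₗ
        (TensorProduct.map LinearMap.id δc) := by
    rw [← TensorProduct.map_comp]; rfl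
  rw [conv_apply, conv_apply, e1, e2]
  simp only [LinearMap.comp_apply]
  rw [hco c]
  have := LinearMap.congr_fun (assoc_mul_shift (A := A) f g h)
    ((TensorProduct.map LinearMap.id δc) (δc c))
  simpa using this

lemma conv_one_left (δc : C →ₗ[ℂ] C ⊗[ℂ] C) (ec : C →ₗ[ℂ] ℂ)
    (hcl : ∀ c : C, (TensorProduct.lid ℂ C) ((TensorProduct.map ec LinearMap.id) (δc c)) = c)
    (f : C →ₗ[ℂ] A) :
    conv δc ((Algebra.linearMap ℂ A) ∘ₗ ec) f = f := by
  apply LinearMap.ext; intro c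
  have e1 : TensorProduct.map ((Algebra.linearMap ℂ A) ∘ₗ ec) f =
      (TensorProduct.map (Algebra.linearMap ℂ A) f) ∘ₗ (TensorProduct.map ec LinearMap.id) := by
    rw [← TensorProduct.map_comp]; rfl
  have e3 : (LinearMap.mul' ℂ A) ∘ₗ TensorProduct.map (Algebra.linearMap ℂ A) f =
      f ∘ₗ (TensorProduct.lid ℂ C).toLinearMap := by
    ext r c'
    simp [Algebra.smul_def]
  rw [conv_apply, e1]
  have := LinearMap.congr_fun e3 ((TensorProduct.map ec LinearMap.id) (δc c))
  simp only [LinearMap.comp_apply] at this ⊢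
  rw [this]; exact congrArg f (hcl c)

lemma conv_one_right (δc : C →ₗ[ℂ] C ⊗[ℂ] C) (ec : C →ₗ[ℂ] ℂ)
    (hcr : ∀ c : C, (TensorProduct.rid ℂ C) ((TensorProduct.map LinearMap.id ec) (δc c)) = c)
    (f : C →ₗ[ℂ] A) :
    conv δc f ((Algebra.linearMap ℂ A) ∘ₗ ec) = f := by
  apply LinearMap.ext; intro c
  have e1 : TensorProduct.map f ((Algebra.linearMap ℂ A) ∘ₗ ec) =
      (TensorProduct.map f (Algebra.linearMap ℂ A)) ∘ₗ (TensorProduct.map LinearMap.id ec) := by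
    rw [← TensorProduct.map_comp]; rfl
  have e3 : (LinearMap.mul' ℂ A) ∘ₗ TensorProduct.map f (Algebra.linearMap ℂ A) =
      f ∘ₗ (TensorProduct.rid ℂ C).toLinearMap := by
    ext c' r
    simp [Algebra.smul_def, Algebra.commutes]
  rw [conv_apply, e1]
  have := LinearMap.congr_fun e3 ((TensorProduct.map LinearMap.id ec) (δc c))
  simp only [LinearMap.comp_apply] at this ⊢
  rw [this]; exact congrArg f (hcr c)

lemma conv_inv_unique (δc : C →ₗ[ℂ] C ⊗[ℂ] C) (ec : C →ₗ[ℂ] ℂ)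
    (hco : ∀ c : C, (TensorProduct.map δc LinearMap.id) (δc c) =
      (TensorProduct.assoc ℂ C C C).symm ((TensorProduct.map LinearMap.id δc) (δc c)))
    (hcl : ∀ c : C, (TensorProduct.lid ℂ C) ((TensorProduct.map ec LinearMap.id) (δc c)) = c)
    (hcr : ∀ c : C, (TensorProduct.rid ℂ C) ((TensorProduct.map LinearMap.id ec) (δc c)) = c)
    (f g k : C →ₗ[ℂ] A)
    (h1 : conv δc f k = (Algebra.linearMap ℂ A) ∘ₗ ec)
    (h2 : conv δc k g = (Algebra.linearMap ℂ A) ∘ₗ ec) :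
    f = g := by
  have : conv δc f (conv δc k g) = conv δc (conv δc f k) g := (conv_assoc δc hco f k g).symm
  rw [h1, h2, conv_one_right δc ec hcr, conv_one_left δc ec hcl] at this
  exact this

end Conv

section Bridges
variable (Δ : A →ₐ[ℂ] A ⊗[ℂ] A) (ε : A →ₐ[ℂ] ℂ)

lemma deltaId_eq' : (deltaId A Δ).toLinearMap =
    TensorProduct.map Δ.toLinearMap LinearMap.id :=
  TensorProduct.ext' fun x y => by simp [deltaId]

lemma deltaId_eq (t : A ⊗[ℂ] A) :
    deltaId A Δ t = TensorProduct.map Δ.toLinearMap LinearMap.id t :=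
  LinearMap.congr_fun (deltaId_eq' Δ) t

lemma algAssoc_symm_eq (u : A ⊗[ℂ] (A ⊗[ℂ] A)) :
    (Algebra.TensorProduct.assoc ℂ ℂ ℂ A A A).symm u = (TensorProduct.assoc ℂ A A A).symm u := rfl

lemma idDelta_eq' : (idDelta A Δ).toLinearMap =
    (TensorProduct.assoc ℂ A A A).symm.toLinearMap ∘ₗ
      TensorProduct.map LinearMap.id Δ.toLinearMap :=
  TensorProduct.ext' fun x y => by simp [idDelta, algAssoc_symm_eq]; rfl

lemma idDelta_eq (t : A ⊗[ℂ] A) :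
    idDelta A Δ t = (TensorProduct.assoc ℂ A A A).symm
      (TensorProduct.map LinearMap.id Δ.toLinearMap t) :=
  LinearMap.congr_fun (idDelta_eq' Δ) t

lemma epsId_eq' : (epsId A ε).toLinearMap =
    (TensorProduct.lid ℂ A).toLinearMap ∘ₗ TensorProduct.map ε.toLinearMap LinearMap.id :=
  TensorProduct.ext' fun x y => by simp [epsId]

lemma epsId_eq (t : A ⊗[ℂ] A) :
    epsId A ε t = (TensorProduct.lid ℂ A) (TensorProduct.map ε.toLinearMap LinearMap.id t) :=
  LinearMap.congr_fun (epsId_eq' ε) t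

lemma idEps_eq' : (idEps A ε).toLinearMap =
    (TensorProduct.rid ℂ A).toLinearMap ∘ₗ TensorProduct.map LinearMap.id ε.toLinearMap :=
  TensorProduct.ext' fun x y => by
    simp [idEps, Algebra.TensorProduct.rid_tmul, TensorProduct.rid_tmul]

lemma idEps_eq (t : A ⊗[ℂ] A) :
    idEps A ε t = (TensorProduct.rid ℂ A) (TensorProduct.map LinearMap.id ε.toLinearMap t) :=
  LinearMap.congr_fun (idEps_eq' ε) t

end Bridges

section Anti
variable (Δ : A →ₐ[ℂ] A ⊗[ℂ] A) (ε : A →ₐ[ℂ] ℂ) (S : A →ₗ[ℂ] A)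

/-- Comultiplication on `A ⊗ A`. -/
def delta2 : A ⊗[ℂ] A →ₗ[ℂ] (A ⊗[ℂ] A) ⊗[ℂ] (A ⊗[ℂ] A) :=
  (tensorTensorTensorComm ℂ A A A A).toLinearMap ∘ₗ
    TensorProduct.map Δ.toLinearMap Δ.toLinearMap

/-- Counit on `A ⊗ A`. -/
def eps2 : A ⊗[ℂ] A →ₗ[ℂ] ℂ := ε.toLinearMap ∘ₗ LinearMap.mul' ℂ A

lemma delta2_tmul (x y : A) :
    delta2 Δ (x ⊗ₜ[ℂ] y) = (tensorTensorTensorComm ℂ A A A A) (Δ x ⊗ₜ[ℂ] Δ y) := rfl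

lemma eps2_tmul (x y : A) : eps2 ε (x ⊗ₜ[ℂ] y) = ε x * ε y := by
  simp [eps2]

/-- left contraction `ε ⊗ id`. -/
def rhoL : A ⊗[ℂ] A →ₗ[ℂ] A :=
  (TensorProduct.lid ℂ A).toLinearMap ∘ₗ TensorProduct.map ε.toLinearMap LinearMap.id

/-- right contraction `id ⊗ ε`. -/
def rhoR : A ⊗[ℂ] A →ₗ[ℂ] A :=
  (TensorProduct.rid ℂ A).toLinearMap ∘ₗ TensorProduct.map LinearMap.id ε.toLinearMap

lemma SL1 : (TensorProduct.lid ℂ (A ⊗[ℂ] A)).toLinearMap ∘ₗ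
      TensorProduct.map (eps2 ε) LinearMap.id ∘ₗ
      (tensorTensorTensorComm ℂ A A A A).toLinearMap =
    TensorProduct.map (rhoL ε) (rhoL ε) := by
  ext x₁ x₂ y₁ y₂
  simp [eps2, rhoL, mul_smul, TensorProduct.smul_tmul', TensorProduct.tmul_smul]
  rw [smul_comm]

lemma SL2 : (TensorProduct.rid ℂ (A ⊗[ℂ] A)).toLinearMap ∘ₗ
      TensorProduct.map LinearMap.id (eps2 ε) ∘ₗ
      (tensorTensorTensorComm ℂ A A A A).toLinearMap =
    TensorProduct.map (rhoR ε) (rhoR ε) := by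
  ext x₁ x₂ y₁ y₂
  simp [eps2, rhoR, mul_smul, TensorProduct.smul_tmul', TensorProduct.tmul_smul]
  rw [smul_comm]


lemma rhoL_eq_epsId (t : A ⊗[ℂ] A) : rhoL ε t = epsId A ε t := (epsId_eq ε t).symm
lemma rhoR_eq_idEps (t : A ⊗[ℂ] A) : rhoR ε t = idEps A ε t := (idEps_eq ε t).symm

lemma delta2_counit_left (hcounit1 : ∀ a : A, epsId A ε (Δ a) = a) (t : A ⊗[ℂ] A) :
    (TensorProduct.lid ℂ (A ⊗[ℂ] A))
      ((TensorProduct.map (eps2 ε) LinearMap.id) (delta2 Δ t)) = t := by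
  have key : (TensorProduct.lid ℂ (A ⊗[ℂ] A)).toLinearMap ∘ₗ
      TensorProduct.map (eps2 ε) LinearMap.id ∘ₗ delta2 Δ = LinearMap.id := by
    apply TensorProduct.ext'
    intro x y
    have h2 := LinearMap.congr_fun (SL1 (A := A) ε) (Δ x ⊗ₜ[ℂ] Δ y)
    simp only [LinearMap.comp_apply, LinearEquiv.coe_coe] at h2
    show (TensorProduct.lid ℂ (A ⊗[ℂ] A))
        ((TensorProduct.map (eps2 ε) LinearMap.id) (delta2 Δ (x ⊗ₜ[ℂ] y))) = x ⊗ₜ[ℂ] y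
    rw [delta2_tmul, h2, TensorProduct.map_tmul, rhoL_eq_epsId, rhoL_eq_epsId,
      hcounit1, hcounit1]
  exact LinearMap.congr_fun key t

lemma delta2_counit_right (hcounit2 : ∀ a : A, idEps A ε (Δ a) = a) (t : A ⊗[ℂ] A) :
    (TensorProduct.rid ℂ (A ⊗[ℂ] A))
      ((TensorProduct.map LinearMap.id (eps2 ε)) (delta2 Δ t)) = t := by
  have key : (TensorProduct.rid ℂ (A ⊗[ℂ] A)).toLinearMap ∘ₗ
      TensorProduct.map LinearMap.id (eps2 ε) ∘ₗ delta2 Δ = LinearMap.id := by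
    apply TensorProduct.ext'
    intro x y
    have h2 := LinearMap.congr_fun (SL2 (A := A) ε) (Δ x ⊗ₜ[ℂ] Δ y)
    simp only [LinearMap.comp_apply, LinearEquiv.coe_coe] at h2
    show (TensorProduct.rid ℂ (A ⊗[ℂ] A))
        ((TensorProduct.map LinearMap.id (eps2 ε)) (delta2 Δ (x ⊗ₜ[ℂ] y))) = x ⊗ₜ[ℂ] y
    rw [delta2_tmul, h2, TensorProduct.map_tmul, rhoR_eq_idEps, rhoR_eq_idEps,
      hcounit2, hcounit2]
  exact LinearMap.congr_fun key t

/-- shuffle for the left coassociativity computation. -/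
def sigmaL : ((A ⊗[ℂ] A) ⊗[ℂ] A) ⊗[ℂ] ((A ⊗[ℂ] A) ⊗[ℂ] A) →ₗ[ℂ]
    ((A ⊗[ℂ] A) ⊗[ℂ] (A ⊗[ℂ] A)) ⊗[ℂ] (A ⊗[ℂ] A) :=
  (TensorProduct.map (tensorTensorTensorComm ℂ A A A A).toLinearMap LinearMap.id) ∘ₗ
    (tensorTensorTensorComm ℂ (A ⊗[ℂ] A) A (A ⊗[ℂ] A) A).toLinearMap

/-- shuffle for the right coassociativity computation. -/
def sigmaR : (A ⊗[ℂ] (A ⊗[ℂ] A)) ⊗[ℂ] (A ⊗[ℂ] (A ⊗[ℂ] A)) →ₗ[ℂ]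
    ((A ⊗[ℂ] A) ⊗[ℂ] (A ⊗[ℂ] A)) ⊗[ℂ] (A ⊗[ℂ] A) :=
  (TensorProduct.assoc ℂ (A ⊗[ℂ] A) (A ⊗[ℂ] A) (A ⊗[ℂ] A)).symm.toLinearMap ∘ₗ
    (TensorProduct.map LinearMap.id (tensorTensorTensorComm ℂ A A A A).toLinearMap) ∘ₗ
    (tensorTensorTensorComm ℂ A (A ⊗[ℂ] A) A (A ⊗[ℂ] A)).toLinearMap

lemma SH1 : (TensorProduct.map (delta2 Δ) LinearMap.id) ∘ₗ
      (tensorTensorTensorComm ℂ A A A A).toLinearMap =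
    sigmaL ∘ₗ TensorProduct.map (TensorProduct.map Δ.toLinearMap LinearMap.id)
      (TensorProduct.map Δ.toLinearMap LinearMap.id) := by
  ext x₁ x₂ y₁ y₂
  simp [sigmaL, delta2_tmul]

lemma SH2 : (TensorProduct.assoc ℂ (A ⊗[ℂ] A) (A ⊗[ℂ] A) (A ⊗[ℂ] A)).symm.toLinearMap ∘ₗ
      (TensorProduct.map LinearMap.id (delta2 Δ)) ∘ₗ
      (tensorTensorTensorComm ℂ A A A A).toLinearMap =
    sigmaR ∘ₗ TensorProduct.map (TensorProduct.map LinearMap.id Δ.toLinearMap)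
      (TensorProduct.map LinearMap.id Δ.toLinearMap) := by
  ext x₁ x₂ y₁ y₂
  simp [sigmaR, delta2_tmul]

lemma SH3 : sigmaL (A := A) ∘ₗ
      TensorProduct.map (TensorProduct.assoc ℂ A A A).symm.toLinearMap
        (TensorProduct.assoc ℂ A A A).symm.toLinearMap =
    sigmaR (A := A) := by
  ext x₁ x₂ x₃ y₁ y₂ y₃
  simp [sigmaL, sigmaR]

lemma delta2_coassoc
    (hcoassoc : ∀ a : A, deltaId A Δ (Δ a) = idDelta A Δ (Δ a)) (t : A ⊗[ℂ] A) :
    (TensorProduct.map (delta2 Δ) LinearMap.id) (delta2 Δ t) =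
      (TensorProduct.assoc ℂ (A ⊗[ℂ] A) (A ⊗[ℂ] A) (A ⊗[ℂ] A)).symm
        ((TensorProduct.map LinearMap.id (delta2 Δ)) (delta2 Δ t)) := by
  have key : (TensorProduct.map (delta2 Δ) LinearMap.id) ∘ₗ delta2 Δ =
      (TensorProduct.assoc ℂ (A ⊗[ℂ] A) (A ⊗[ℂ] A) (A ⊗[ℂ] A)).symm.toLinearMap ∘ₗ
        (TensorProduct.map LinearMap.id (delta2 Δ)) ∘ₗ delta2 Δ := by
    apply TensorProduct.ext'
    intro x y
    have L := LinearMap.congr_fun (SH1 (A := A) Δ) (Δ x ⊗ₜ[ℂ] Δ y)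
    have R := LinearMap.congr_fun (SH2 (A := A) Δ) (Δ x ⊗ₜ[ℂ] Δ y)
    simp only [LinearMap.comp_apply, LinearEquiv.coe_coe, TensorProduct.map_tmul] at L R
    show (TensorProduct.map (delta2 Δ) LinearMap.id) (delta2 Δ (x ⊗ₜ[ℂ] y)) =
      (TensorProduct.assoc ℂ (A ⊗[ℂ] A) (A ⊗[ℂ] A) (A ⊗[ℂ] A)).symm
        ((TensorProduct.map LinearMap.id (delta2 Δ)) (delta2 Δ (x ⊗ₜ[ℂ] y)))
    rw [delta2_tmul, L, R]
    have cox : TensorProduct.map Δ.toLinearMap LinearMap.id (Δ x) =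
        (TensorProduct.assoc ℂ A A A).symm
          (TensorProduct.map LinearMap.id Δ.toLinearMap (Δ x)) := by
      rw [← deltaId_eq, ← idDelta_eq, hcoassoc]
    have coy : TensorProduct.map Δ.toLinearMap LinearMap.id (Δ y) =
        (TensorProduct.assoc ℂ A A A).symm
          (TensorProduct.map LinearMap.id Δ.toLinearMap (Δ y)) := by
      rw [← deltaId_eq, ← idDelta_eq, hcoassoc]
    rw [cox, coy]
    have := LinearMap.congr_fun (SH3 (A := A))
      ((TensorProduct.map LinearMap.id Δ.toLinearMap (Δ x)) ⊗ₜ[ℂ]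
        (TensorProduct.map LinearMap.id Δ.toLinearMap (Δ y)))
    simp only [LinearMap.comp_apply, TensorProduct.map_tmul, LinearEquiv.coe_coe] at this
    exact this
  exact LinearMap.congr_fun key t

/-- `x ⊗ y ↦ S y * S x`. -/
def fS : A ⊗[ℂ] A →ₗ[ℂ] A :=
  LinearMap.mul' ℂ A ∘ₗ TensorProduct.map S S ∘ₗ (TensorProduct.comm ℂ A A).toLinearMap

/-- `x ⊗ y ↦ S x * y`. -/
def psi1 : A ⊗[ℂ] A →ₗ[ℂ] A := LinearMap.mul' ℂ A ∘ₗ TensorProduct.map S LinearMap.id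

lemma psi1_delta (hS : IsAntipode Δ ε S) (a : A) :
    psi1 S (Δ a) = algebraMap ℂ A (ε a) := hS.1 a

lemma mul2_eq : (TensorProduct.map (LinearMap.mul' ℂ A) (LinearMap.mul' ℂ A)) ∘ₗ
      (tensorTensorTensorComm ℂ A A A A).toLinearMap =
    LinearMap.mul' ℂ (A ⊗[ℂ] A) := by
  ext x₁ x₂ y₁ y₂
  simp

lemma MD : Δ.toLinearMap ∘ₗ LinearMap.mul' ℂ A =
    (TensorProduct.map (LinearMap.mul' ℂ A) (LinearMap.mul' ℂ A)) ∘ₗ delta2 Δ := by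
  apply TensorProduct.ext'
  intro x y
  have := LinearMap.congr_fun (mul2_eq (A := A)) (Δ x ⊗ₜ[ℂ] Δ y)
  simp only [LinearMap.comp_apply, LinearEquiv.coe_coe] at this ⊢
  rw [delta2_tmul, this]
  simp

lemma conv_m_Sm (hS : IsAntipode Δ ε S) :
    conv (delta2 Δ) (LinearMap.mul' ℂ A) (S ∘ₗ LinearMap.mul' ℂ A) =
      Algebra.linearMap ℂ A ∘ₗ eps2 ε := by
  apply LinearMap.ext; intro t
  rw [conv_apply]
  have e1 : TensorProduct.map (LinearMap.mul' ℂ A) (S ∘ₗ LinearMap.mul' ℂ A) =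
      (TensorProduct.map LinearMap.id S) ∘ₗ
        TensorProduct.map (LinearMap.mul' ℂ A) (LinearMap.mul' ℂ A) := by
    rw [← TensorProduct.map_comp, LinearMap.id_comp]
  rw [e1]
  have e2 := LinearMap.congr_fun (MD (A := A) Δ) t
  simp only [LinearMap.comp_apply, AlgHom.toLinearMap_apply] at e2 ⊢
  rw [← e2, hS.2 (LinearMap.mul' ℂ A t)]
  rfl

lemma CH1 : LinearMap.mul' ℂ A ∘ₗ TensorProduct.map (fS S) (LinearMap.mul' ℂ A) ∘ₗ
      (tensorTensorTensorComm ℂ A A A A).toLinearMap =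
    (LinearMap.mul' ℂ A ∘ₗ
      TensorProduct.map (LinearMap.mul' ℂ A ∘ₗ TensorProduct.map S LinearMap.id ∘ₗ
        (TensorProduct.comm ℂ A A).toLinearMap) LinearMap.id ∘ₗ
      (TensorProduct.assoc ℂ A A A).symm.toLinearMap) ∘ₗ
    TensorProduct.map (psi1 S) LinearMap.id := by
  ext x₁ x₂ y₁ y₂
  simp [fS, psi1, mul_assoc]

lemma CH2 : (LinearMap.mul' ℂ A ∘ₗ
      TensorProduct.map (LinearMap.mul' ℂ A ∘ₗ TensorProduct.map S LinearMap.id ∘ₗ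
        (TensorProduct.comm ℂ A A).toLinearMap) LinearMap.id ∘ₗ
      (TensorProduct.assoc ℂ A A A).symm.toLinearMap) ∘ₗ
    TensorProduct.mk ℂ A (A ⊗[ℂ] A) 1 = psi1 S := by
  apply TensorProduct.ext'
  intro y₁ y₂
  simp [psi1]

lemma conv_fS_m (hS : IsAntipode Δ ε S) :
    conv (delta2 Δ) (fS S) (LinearMap.mul' ℂ A) = Algebra.linearMap ℂ A ∘ₗ eps2 ε := by
  apply TensorProduct.ext'
  intro x y
  rw [conv_apply, delta2_tmul]
  have e1 := LinearMap.congr_fun (CH1 (A := A) S) (Δ x ⊗ₜ[ℂ] Δ y)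
  simp only [LinearMap.comp_apply, LinearEquiv.coe_coe, TensorProduct.map_tmul,
    LinearMap.id_coe, id_eq] at e1
  rw [e1, psi1_delta Δ ε S hS x]
  have : (algebraMap ℂ A (ε x)) ⊗ₜ[ℂ] (Δ y) = ε x • ((1 : A) ⊗ₜ[ℂ] (Δ y)) := by
    rw [Algebra.algebraMap_eq_smul_one, TensorProduct.smul_tmul']
  rw [this]
  simp only [map_smul]
  have e2 := LinearMap.congr_fun (CH2 (A := A) S) (Δ y)
  simp only [LinearMap.comp_apply, TensorProduct.mk_apply, LinearEquiv.coe_coe] at e2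
  rw [e2, psi1_delta Δ ε S hS y]
  simp only [LinearMap.comp_apply, eps2_tmul, Algebra.linearMap_apply, map_mul]
  rw [Algebra.algebraMap_eq_smul_one, Algebra.algebraMap_eq_smul_one]
  rw [smul_mul_assoc, one_mul]

lemma antipode_antimul
    (hcoassoc : ∀ a : A, deltaId A Δ (Δ a) = idDelta A Δ (Δ a))
    (hcounit1 : ∀ a : A, epsId A ε (Δ a) = a)
    (hcounit2 : ∀ a : A, idEps A ε (Δ a) = a)
    (hS : IsAntipode Δ ε S) : ∀ x y : A, S (x * y) = S y * S x := by
  have main : fS S = S ∘ₗ LinearMap.mul' ℂ A :=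
    conv_inv_unique (delta2 Δ) (eps2 ε) (delta2_coassoc Δ hcoassoc)
      (delta2_counit_left Δ ε hcounit1) (delta2_counit_right Δ ε hcounit2)
      (fS S) (S ∘ₗ LinearMap.mul' ℂ A) (LinearMap.mul' ℂ A)
      (conv_fS_m Δ ε S hS) (conv_m_Sm Δ ε S hS)
  intro x y
  have := LinearMap.congr_fun main (x ⊗ₜ[ℂ] y)
  simp only [fS, LinearMap.comp_apply, LinearEquiv.coe_coe, TensorProduct.comm_tmul,
    TensorProduct.map_tmul, LinearMap.mul'_apply] at this
  exact this.symm

lemma antipode_one (hS : IsAntipode Δ ε S) : S 1 = 1 := by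
  have := hS.1 1
  rw [map_one (f := Δ), map_one (f := ε), Algebra.TensorProduct.one_def] at this
  simpa using this

end Anti

section QT
variable (Δ : A →ₐ[ℂ] A ⊗[ℂ] A) (ε : A →ₐ[ℂ] ℂ) (S : A →ₗ[ℂ] A)

lemma map_map_left {M₁ M₂ M₃ N : Type*} [AddCommGroup M₁] [Module ℂ M₁]
    [AddCommGroup M₂] [Module ℂ M₂] [AddCommGroup M₃] [Module ℂ M₃]
    [AddCommGroup N] [Module ℂ N]
    (f₂ : M₂ →ₗ[ℂ] M₃) (f₁ : M₁ →ₗ[ℂ] M₂) (t : M₁ ⊗[ℂ] N) :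
    TensorProduct.map f₂ LinearMap.id (TensorProduct.map f₁ LinearMap.id t) =
      TensorProduct.map (f₂ ∘ₗ f₁) LinearMap.id t := by
  have : TensorProduct.map (f₂ ∘ₗ f₁) (LinearMap.id : N →ₗ[ℂ] N) =
      TensorProduct.map f₂ LinearMap.id ∘ₗ TensorProduct.map f₁ LinearMap.id := by
    rw [← TensorProduct.map_comp, LinearMap.id_comp]
  rw [this]; rfl

lemma map_map_right {N₁ N₂ N₃ M : Type*} [AddCommGroup N₁] [Module ℂ N₁]
    [AddCommGroup N₂] [Module ℂ N₂] [AddCommGroup N₃] [Module ℂ N₃]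
    [AddCommGroup M] [Module ℂ M]
    (g₂ : N₂ →ₗ[ℂ] N₃) (g₁ : N₁ →ₗ[ℂ] N₂) (t : M ⊗[ℂ] N₁) :
    TensorProduct.map LinearMap.id g₂ (TensorProduct.map LinearMap.id g₁ t) =
      TensorProduct.map LinearMap.id (g₂ ∘ₗ g₁) t := by
  have : TensorProduct.map (LinearMap.id : M →ₗ[ℂ] M) (g₂ ∘ₗ g₁) =
      TensorProduct.map LinearMap.id g₂ ∘ₗ TensorProduct.map LinearMap.id g₁ := by
    rw [← TensorProduct.map_comp, LinearMap.id_comp]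
  rw [this]; rfl

/-- `a ⊗ b ↦ S b * a`. -/
def uOf : A ⊗[ℂ] A →ₗ[ℂ] A := psi1 S ∘ₗ (TensorProduct.comm ℂ A A).toLinearMap

lemma uOf_tmul (a b : A) : uOf S (a ⊗ₜ[ℂ] b) = S b * a := by
  simp only [uOf, psi1, LinearMap.comp_apply, LinearEquiv.coe_coe, TensorProduct.comm_tmul,
    TensorProduct.map_tmul, LinearMap.mul'_apply, LinearMap.id_coe, id_eq]

/-- `a ⊗ b ↦ b * S (S a)`. -/
def vOf : A ⊗[ℂ] A →ₗ[ℂ] A :=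
  LinearMap.mul' ℂ A ∘ₗ TensorProduct.map LinearMap.id (S ∘ₗ S) ∘ₗ
    (TensorProduct.comm ℂ A A).toLinearMap

lemma vOf_tmul (a b : A) : vOf S (a ⊗ₜ[ℂ] b) = b * S (S a) := by
  simp only [vOf, LinearMap.comp_apply, LinearEquiv.coe_coe, TensorProduct.comm_tmul,
    TensorProduct.map_tmul, LinearMap.mul'_apply, LinearMap.id_coe, id_eq]

/-- `(y ⊗ z) ⊗ w ↦ y ⊗ (z * S w)`. -/
def contract23 : (A ⊗[ℂ] A) ⊗[ℂ] A →ₗ[ℂ] A ⊗[ℂ] A :=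
  (TensorProduct.map LinearMap.id (LinearMap.mul' ℂ A ∘ₗ TensorProduct.map LinearMap.id S)) ∘ₗ
    (TensorProduct.assoc ℂ A A A).toLinearMap

/-- `(y ⊗ z) ⊗ w ↦ (S y * z) ⊗ w`. -/
def contract12 : (A ⊗[ℂ] A) ⊗[ℂ] A →ₗ[ℂ] A ⊗[ℂ] A :=
  TensorProduct.map (psi1 S) LinearMap.id

/-- `(y ⊗ z) ⊗ w ↦ y ⊗ (S z * w)`. -/
def contract23S : (A ⊗[ℂ] A) ⊗[ℂ] A →ₗ[ℂ] A ⊗[ℂ] A :=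
  (TensorProduct.map LinearMap.id (psi1 S)) ∘ₗ (TensorProduct.assoc ℂ A A A).toLinearMap

lemma mapEta_left (t : A ⊗[ℂ] A) :
    TensorProduct.map (Algebra.linearMap ℂ A ∘ₗ ε.toLinearMap) LinearMap.id t =
      (TensorProduct.mk ℂ A A 1) (rhoL ε t) := by
  have : TensorProduct.map (Algebra.linearMap ℂ A ∘ₗ ε.toLinearMap) LinearMap.id =
      (TensorProduct.mk ℂ A A 1) ∘ₗ rhoL ε := by
    apply TensorProduct.ext'
    intro a b
    simp only [TensorProduct.map_tmul, LinearMap.comp_apply, TensorProduct.mk_apply,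
      LinearMap.id_coe, id_eq, Algebra.linearMap_apply, AlgHom.toLinearMap_apply, rhoL,
      LinearEquiv.coe_coe, TensorProduct.lid_tmul]
    rw [Algebra.algebraMap_eq_smul_one, TensorProduct.smul_tmul]
  rw [this]; rfl

lemma mapEta_right (t : A ⊗[ℂ] A) :
    TensorProduct.map LinearMap.id (Algebra.linearMap ℂ A ∘ₗ ε.toLinearMap) t =
      ((TensorProduct.mk ℂ A A).flip 1) (rhoR ε t) := by
  have : TensorProduct.map LinearMap.id (Algebra.linearMap ℂ A ∘ₗ ε.toLinearMap) =
      ((TensorProduct.mk ℂ A A).flip 1) ∘ₗ rhoR ε := by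
    apply TensorProduct.ext'
    intro a b
    simp only [TensorProduct.map_tmul, LinearMap.comp_apply, LinearMap.flip_apply,
      TensorProduct.mk_apply, LinearMap.id_coe, id_eq, Algebra.linearMap_apply,
      AlgHom.toLinearMap_apply, rhoR, LinearEquiv.coe_coe, TensorProduct.rid_tmul]
    rw [Algebra.algebraMap_eq_smul_one, ← TensorProduct.smul_tmul]
  rw [this]; rfl

lemma psi1_Delta_eq (hS : IsAntipode Δ ε S) :
    psi1 S ∘ₗ Δ.toLinearMap = Algebra.linearMap ℂ A ∘ₗ ε.toLinearMap :=
  LinearMap.ext fun a => by simpa [psi1] using hS.1 a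

lemma idS_Delta_eq (hS : IsAntipode Δ ε S) :
    (LinearMap.mul' ℂ A ∘ₗ TensorProduct.map LinearMap.id S) ∘ₗ Δ.toLinearMap =
      Algebra.linearMap ℂ A ∘ₗ ε.toLinearMap :=
  LinearMap.ext fun a => by simpa using hS.2 a

lemma C_left (hS : IsAntipode Δ ε S) (hcounit1 : ∀ a : A, epsId A ε (Δ a) = a) (x : A) :
    contract12 S (deltaId A Δ (Δ x)) = (1 : A) ⊗ₜ[ℂ] x := by
  rw [deltaId_eq]
  unfold contract12
  rw [map_map_left, psi1_Delta_eq Δ ε S hS, mapEta_left, rhoL_eq_epsId, hcounit1]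
  rfl

lemma C_right (hS : IsAntipode Δ ε S)
    (hcoassoc : ∀ a : A, deltaId A Δ (Δ a) = idDelta A Δ (Δ a))
    (hcounit2 : ∀ a : A, idEps A ε (Δ a) = a) (x : A) :
    contract23 S (deltaId A Δ (Δ x)) = x ⊗ₜ[ℂ] (1 : A) := by
  rw [hcoassoc, idDelta_eq]
  unfold contract23
  simp only [LinearMap.comp_apply, LinearEquiv.coe_coe, LinearEquiv.apply_symm_apply]
  rw [map_map_right, idS_Delta_eq Δ ε S hS, mapEta_right, rhoR_eq_idEps, hcounit2]
  rfl

lemma C_rightS (hS : IsAntipode Δ ε S)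
    (hcoassoc : ∀ a : A, deltaId A Δ (Δ a) = idDelta A Δ (Δ a))
    (hcounit2 : ∀ a : A, idEps A ε (Δ a) = a) (x : A) :
    contract23S S (deltaId A Δ (Δ x)) = x ⊗ₜ[ℂ] (1 : A) := by
  rw [hcoassoc, idDelta_eq]
  unfold contract23S
  simp only [LinearMap.comp_apply, LinearEquiv.coe_coe, LinearEquiv.apply_symm_apply]
  rw [map_map_right, psi1_Delta_eq Δ ε S hS, mapEta_right, rhoR_eq_idEps, hcounit2]
  rfl

lemma tensorFlip_eq (t : A ⊗[ℂ] A) : tensorFlip A t = (TensorProduct.comm ℂ A A) t := rfl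

lemma T12 (R : A ⊗[ℂ] A) (hint : ∀ a : A, R * Δ a = tensorFlip A (Δ a) * R) (x : A) :
    leg12 A R * deltaId A Δ (Δ x) =
      (TensorProduct.map (TensorProduct.comm ℂ A A).toLinearMap LinearMap.id)
        (deltaId A Δ (Δ x)) * leg12 A R := by
  have key : LinearMap.mulLeft ℂ (leg12 A R) ∘ₗ (deltaId A Δ).toLinearMap =
      LinearMap.mulRight ℂ (leg12 A R) ∘ₗ
        (TensorProduct.map (TensorProduct.comm ℂ A A).toLinearMap LinearMap.id) ∘ₗ
        (deltaId A Δ).toLinearMap := by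
    apply TensorProduct.ext'
    intro y z
    have hlr : leg12 A R = R ⊗ₜ[ℂ] (1 : A) := rfl
    simp only [LinearMap.comp_apply, LinearMap.mulLeft_apply, LinearMap.mulRight_apply,
      AlgHom.toLinearMap_apply]
    have hd : deltaId A Δ (y ⊗ₜ[ℂ] z) = (Δ y) ⊗ₜ[ℂ] z := by simp [deltaId]
    rw [hd, hlr, Algebra.TensorProduct.tmul_mul_tmul, hint y, TensorProduct.map_tmul,
      Algebra.TensorProduct.tmul_mul_tmul, tensorFlip_eq]
    simp
  have := LinearMap.congr_fun key (Δ x)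
  simpa using this

/-- `(y⊗z)⊗w ↦ S²(w) * (S z * y)`. -/
def Phi : (A ⊗[ℂ] A) ⊗[ℂ] A →ₗ[ℂ] A :=
  LinearMap.mul' ℂ A ∘ₗ (TensorProduct.comm ℂ A A).toLinearMap ∘ₗ
    TensorProduct.map (psi1 S ∘ₗ (TensorProduct.comm ℂ A A).toLinearMap) (S ∘ₗ S)

lemma Phi_tmul (y z w : A) :
    Phi S ((y ⊗ₜ[ℂ] z) ⊗ₜ[ℂ] w) = S (S w) * (S z * y) := by
  simp only [Phi, LinearMap.comp_apply, LinearEquiv.coe_coe, TensorProduct.map_tmul,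
    TensorProduct.comm_tmul, psi1, LinearMap.mul'_apply, LinearMap.id_coe, id_eq]

def chiA : (A ⊗[ℂ] A) ⊗[ℂ] (A ⊗[ℂ] A) →ₗ[ℂ] A :=
  LinearMap.mul' ℂ A ∘ₗ (TensorProduct.comm ℂ A A).toLinearMap ∘ₗ
    TensorProduct.map (LinearMap.mul' ℂ A) (fS S) ∘ₗ
    (tensorTensorTensorComm ℂ A A A A).toLinearMap

lemma chiA_tmul (a b p q : A) :
    chiA S ((a ⊗ₜ[ℂ] b) ⊗ₜ[ℂ] (p ⊗ₜ[ℂ] q)) = (S q * S b) * (a * p) := by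
  simp only [chiA, fS, LinearMap.comp_apply, LinearEquiv.coe_coe,
    tensorTensorTensorComm_tmul, TensorProduct.map_tmul, TensorProduct.comm_tmul,
    LinearMap.mul'_apply]

def chiA' : (A ⊗[ℂ] A) ⊗[ℂ] (A ⊗[ℂ] A) →ₗ[ℂ] A :=
  LinearMap.mul' ℂ A ∘ₗ (TensorProduct.comm ℂ A A).toLinearMap ∘ₗ
    TensorProduct.map (LinearMap.mul' ℂ A)
      (fS S ∘ₗ TensorProduct.map LinearMap.id S ∘ₗ (TensorProduct.comm ℂ A A).toLinearMap) ∘ₗ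
    (tensorTensorTensorComm ℂ A A A A).toLinearMap

lemma chiA'_tmul (p w a b : A) :
    chiA' S ((p ⊗ₜ[ℂ] w) ⊗ₜ[ℂ] (a ⊗ₜ[ℂ] b)) = (S (S w) * S b) * (p * a) := by
  simp only [chiA', fS, LinearMap.comp_apply, LinearEquiv.coe_coe,
    tensorTensorTensorComm_tmul, TensorProduct.map_tmul, TensorProduct.comm_tmul,
    LinearMap.mul'_apply, LinearMap.id_coe, id_eq]

lemma GA1 (hanti : ∀ x y : A, S (x * y) = S y * S x) :
    Phi S ∘ₗ LinearMap.mul' ℂ ((A ⊗[ℂ] A) ⊗[ℂ] A) ∘ₗ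
      TensorProduct.map (leg12 A).toLinearMap LinearMap.id =
    chiA S ∘ₗ TensorProduct.map LinearMap.id (contract23 S) := by
  ext a b y z w
  simp only [TensorProduct.AlgebraTensorModule.curry_apply, TensorProduct.curry_apply,
    LinearMap.coe_restrictScalars, LinearMap.comp_apply, TensorProduct.map_tmul,
    AlgHom.toLinearMap_apply, LinearMap.mul'_apply, LinearMap.id_coe, id_eq,
    LinearMap.compr₂_apply, TensorProduct.mk_apply]
  have hleg : leg12 A (a ⊗ₜ[ℂ] b) = (a ⊗ₜ[ℂ] b) ⊗ₜ[ℂ] (1 : A) := rfl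
  have hc : contract23 S ((y ⊗ₜ[ℂ] z) ⊗ₜ[ℂ] w) = y ⊗ₜ[ℂ] (z * S w) := by
    simp only [contract23, LinearMap.comp_apply, LinearEquiv.coe_coe,
      TensorProduct.assoc_tmul, TensorProduct.map_tmul, LinearMap.mul'_apply,
      LinearMap.id_coe, id_eq]
  rw [hleg, hc, Algebra.TensorProduct.tmul_mul_tmul, Algebra.TensorProduct.tmul_mul_tmul,
    one_mul, Phi_tmul, chiA_tmul]
  rw [hanti b z, hanti z (S w)]
  simp [mul_assoc]

lemma GA2 (hanti : ∀ x y : A, S (x * y) = S y * S x) :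
    Phi S ∘ₗ LinearMap.mul' ℂ ((A ⊗[ℂ] A) ⊗[ℂ] A) ∘ₗ
      TensorProduct.map
        (TensorProduct.map (TensorProduct.comm ℂ A A).toLinearMap LinearMap.id)
        (leg12 A).toLinearMap =
    chiA' S ∘ₗ TensorProduct.map (contract12 S) LinearMap.id := by
  ext y z w a b
  simp only [TensorProduct.AlgebraTensorModule.curry_apply, TensorProduct.curry_apply,
    LinearMap.coe_restrictScalars, LinearMap.comp_apply, TensorProduct.map_tmul,
    AlgHom.toLinearMap_apply, LinearMap.mul'_apply, LinearMap.id_coe, id_eq,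
    LinearMap.compr₂_apply, TensorProduct.mk_apply, LinearEquiv.coe_coe,
    TensorProduct.comm_tmul]
  have hleg : leg12 A (a ⊗ₜ[ℂ] b) = (a ⊗ₜ[ℂ] b) ⊗ₜ[ℂ] (1 : A) := rfl
  have hc : contract12 S ((y ⊗ₜ[ℂ] z) ⊗ₜ[ℂ] w) = (S y * z) ⊗ₜ[ℂ] w := by
    simp only [contract12, TensorProduct.map_tmul, psi1, LinearMap.comp_apply,
      LinearMap.mul'_apply, LinearMap.id_coe, id_eq]
  rw [hleg, hc, Algebra.TensorProduct.tmul_mul_tmul, Algebra.TensorProduct.tmul_mul_tmul,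
    mul_one, Phi_tmul, chiA'_tmul]
  rw [hanti y b]
  simp [mul_assoc]

lemma ur1 (hone : S 1 = 1) (x : A) :
    chiA S ∘ₗ ((TensorProduct.mk ℂ (A ⊗[ℂ] A) (A ⊗[ℂ] A)).flip (x ⊗ₜ[ℂ] (1 : A))) =
      LinearMap.mulRight ℂ x ∘ₗ uOf S := by
  apply TensorProduct.ext'
  intro a b
  simp only [LinearMap.comp_apply, LinearMap.flip_apply, TensorProduct.mk_apply,
    LinearMap.mulRight_apply, uOf_tmul, chiA_tmul, hone, one_mul, mul_assoc]

lemma ur2 (x : A) :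
    chiA' S ∘ₗ (TensorProduct.mk ℂ (A ⊗[ℂ] A) (A ⊗[ℂ] A) ((1 : A) ⊗ₜ[ℂ] x)) =
      LinearMap.mulLeft ℂ (S (S x)) ∘ₗ uOf S := by
  apply TensorProduct.ext'
  intro a b
  simp only [LinearMap.comp_apply, TensorProduct.mk_apply, LinearMap.mulLeft_apply,
    uOf_tmul, chiA'_tmul, one_mul, mul_assoc]

lemma drinfeld_A (hanti : ∀ x y : A, S (x * y) = S y * S x) (hone : S 1 = 1)
    (hS : IsAntipode Δ ε S)
    (hcoassoc : ∀ a : A, deltaId A Δ (Δ a) = idDelta A Δ (Δ a))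
    (hcounit1 : ∀ a : A, epsId A ε (Δ a) = a)
    (hcounit2 : ∀ a : A, idEps A ε (Δ a) = a)
    (R : A ⊗[ℂ] A) (hint : ∀ a : A, R * Δ a = tensorFlip A (Δ a) * R) (x : A) :
    uOf S R * x = S (S x) * uOf S R := by
  have t12 := T12 Δ R hint x
  have hL := LinearMap.congr_fun (GA1 (A := A) S hanti)
    (R ⊗ₜ[ℂ] (deltaId A Δ (Δ x)))
  have hR := LinearMap.congr_fun (GA2 (A := A) S hanti)
    ((deltaId A Δ (Δ x)) ⊗ₜ[ℂ] R)
  simp only [LinearMap.comp_apply, TensorProduct.map_tmul, AlgHom.toLinearMap_apply,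
    LinearMap.mul'_apply, LinearMap.id_coe, id_eq] at hL hR
  rw [C_right Δ ε S hS hcoassoc hcounit2 x] at hL
  rw [C_left Δ ε S hS hcounit1 x] at hR
  have hu1 := LinearMap.congr_fun (ur1 (A := A) S hone x) R
  have hu2 := LinearMap.congr_fun (ur2 (A := A) S x) R
  simp only [LinearMap.comp_apply, LinearMap.flip_apply, TensorProduct.mk_apply,
    LinearMap.mulRight_apply, LinearMap.mulLeft_apply] at hu1 hu2
  rw [hu1] at hL
  rw [hu2] at hR
  rw [← hL, ← hR, t12]

/-- `(y⊗z)⊗w ↦ (z * S w) * S²(y)`. -/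
def Psi : (A ⊗[ℂ] A) ⊗[ℂ] A →ₗ[ℂ] A :=
  LinearMap.mul' ℂ A ∘ₗ
    TensorProduct.map (LinearMap.mul' ℂ A ∘ₗ TensorProduct.map LinearMap.id S) (S ∘ₗ S) ∘ₗ
    (TensorProduct.comm ℂ A (A ⊗[ℂ] A)).toLinearMap ∘ₗ
    (TensorProduct.assoc ℂ A A A).toLinearMap

lemma Psi_tmul (y z w : A) :
    Psi S ((y ⊗ₜ[ℂ] z) ⊗ₜ[ℂ] w) = (z * S w) * S (S y) := by
  simp only [Psi, LinearMap.comp_apply, LinearEquiv.coe_coe, TensorProduct.assoc_tmul,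
    TensorProduct.comm_tmul, TensorProduct.map_tmul, LinearMap.mul'_apply,
    LinearMap.id_coe, id_eq]

def chiB : (A ⊗[ℂ] A) ⊗[ℂ] (A ⊗[ℂ] A) →ₗ[ℂ] A :=
  LinearMap.mul' ℂ A ∘ₗ (TensorProduct.comm ℂ A A).toLinearMap ∘ₗ
    TensorProduct.map (LinearMap.mul' ℂ A ∘ₗ TensorProduct.map (S ∘ₗ S) (S ∘ₗ S))
      (LinearMap.mul' ℂ A) ∘ₗ
    (tensorTensorTensorComm ℂ A A A A).toLinearMap

lemma chiB_tmul (a b y c : A) :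
    chiB S ((a ⊗ₜ[ℂ] b) ⊗ₜ[ℂ] (y ⊗ₜ[ℂ] c)) = (b * c) * (S (S a) * S (S y)) := by
  simp only [chiB, LinearMap.comp_apply, LinearEquiv.coe_coe,
    tensorTensorTensorComm_tmul, TensorProduct.map_tmul, TensorProduct.comm_tmul,
    LinearMap.mul'_apply]

def chiB' : (A ⊗[ℂ] A) ⊗[ℂ] (A ⊗[ℂ] A) →ₗ[ℂ] A :=
  LinearMap.mul' ℂ A ∘ₗ
    TensorProduct.map (LinearMap.mul' ℂ A)
      (LinearMap.mul' ℂ A ∘ₗ TensorProduct.map S (S ∘ₗ S)) ∘ₗ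
    (tensorTensorTensorComm ℂ A A A A).toLinearMap ∘ₗ
    (TensorProduct.map LinearMap.id (TensorProduct.comm ℂ A A).toLinearMap)

lemma chiB'_tmul (y c a b : A) :
    chiB' S ((y ⊗ₜ[ℂ] c) ⊗ₜ[ℂ] (a ⊗ₜ[ℂ] b)) = (y * b) * (S c * S (S a)) := by
  simp only [chiB', LinearMap.comp_apply, LinearEquiv.coe_coe, TensorProduct.map_tmul,
    TensorProduct.comm_tmul, tensorTensorTensorComm_tmul, LinearMap.mul'_apply,
    LinearMap.id_coe, id_eq]

lemma GB1 (hanti : ∀ x y : A, S (x * y) = S y * S x) :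
    Psi S ∘ₗ LinearMap.mul' ℂ ((A ⊗[ℂ] A) ⊗[ℂ] A) ∘ₗ
      TensorProduct.map (leg12 A).toLinearMap LinearMap.id =
    chiB S ∘ₗ TensorProduct.map LinearMap.id (contract23 S) := by
  ext a b y z w
  simp only [TensorProduct.AlgebraTensorModule.curry_apply, TensorProduct.curry_apply,
    LinearMap.coe_restrictScalars, LinearMap.comp_apply, TensorProduct.map_tmul,
    AlgHom.toLinearMap_apply, LinearMap.mul'_apply, LinearMap.id_coe, id_eq,
    LinearMap.compr₂_apply, TensorProduct.mk_apply]
  have hleg : leg12 A (a ⊗ₜ[ℂ] b) = (a ⊗ₜ[ℂ] b) ⊗ₜ[ℂ] (1 : A) := rfl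
  have hc : contract23 S ((y ⊗ₜ[ℂ] z) ⊗ₜ[ℂ] w) = y ⊗ₜ[ℂ] (z * S w) := by
    simp only [contract23, LinearMap.comp_apply, LinearEquiv.coe_coe,
      TensorProduct.assoc_tmul, TensorProduct.map_tmul, LinearMap.mul'_apply,
      LinearMap.id_coe, id_eq]
  rw [hleg, hc, Algebra.TensorProduct.tmul_mul_tmul, Algebra.TensorProduct.tmul_mul_tmul,
    one_mul, Psi_tmul, chiB_tmul]
  rw [hanti a y, hanti (S y) (S a)]
  simp [mul_assoc]

lemma GB2 (hanti : ∀ x y : A, S (x * y) = S y * S x) :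
    Psi S ∘ₗ LinearMap.mul' ℂ ((A ⊗[ℂ] A) ⊗[ℂ] A) ∘ₗ
      TensorProduct.map
        (TensorProduct.map (TensorProduct.comm ℂ A A).toLinearMap LinearMap.id)
        (leg12 A).toLinearMap =
    chiB' S ∘ₗ TensorProduct.map (contract23S S) LinearMap.id := by
  ext y z w a b
  simp only [TensorProduct.AlgebraTensorModule.curry_apply, TensorProduct.curry_apply,
    LinearMap.coe_restrictScalars, LinearMap.comp_apply, TensorProduct.map_tmul,
    AlgHom.toLinearMap_apply, LinearMap.mul'_apply, LinearMap.id_coe, id_eq,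
    LinearMap.compr₂_apply, TensorProduct.mk_apply, LinearEquiv.coe_coe,
    TensorProduct.comm_tmul]
  have hleg : leg12 A (a ⊗ₜ[ℂ] b) = (a ⊗ₜ[ℂ] b) ⊗ₜ[ℂ] (1 : A) := rfl
  have hc : contract23S S ((y ⊗ₜ[ℂ] z) ⊗ₜ[ℂ] w) = y ⊗ₜ[ℂ] (S z * w) := by
    simp only [contract23S, LinearMap.comp_apply, LinearEquiv.coe_coe,
      TensorProduct.assoc_tmul, TensorProduct.map_tmul, psi1, LinearMap.mul'_apply,
      LinearMap.id_coe, id_eq]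
  rw [hleg, hc, Algebra.TensorProduct.tmul_mul_tmul, Algebra.TensorProduct.tmul_mul_tmul,
    mul_one, Psi_tmul, chiB'_tmul]
  rw [hanti z a, hanti (S a) (S z), hanti (S z) w]
  simp [mul_assoc]

lemma br1 (x : A) :
    chiB S ∘ₗ ((TensorProduct.mk ℂ (A ⊗[ℂ] A) (A ⊗[ℂ] A)).flip (x ⊗ₜ[ℂ] (1 : A))) =
      LinearMap.mulRight ℂ (S (S x)) ∘ₗ vOf S := by
  apply TensorProduct.ext'
  intro a b
  simp only [LinearMap.comp_apply, LinearMap.flip_apply, TensorProduct.mk_apply,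
    LinearMap.mulRight_apply, vOf_tmul, chiB_tmul, mul_one, mul_assoc]

lemma br2 (hone : S 1 = 1) (x : A) :
    chiB' S ∘ₗ (TensorProduct.mk ℂ (A ⊗[ℂ] A) (A ⊗[ℂ] A) (x ⊗ₜ[ℂ] (1 : A))) =
      LinearMap.mulLeft ℂ x ∘ₗ vOf S := by
  apply TensorProduct.ext'
  intro a b
  simp only [LinearMap.comp_apply, TensorProduct.mk_apply, LinearMap.mulLeft_apply,
    vOf_tmul, chiB'_tmul, hone, one_mul, mul_assoc]

lemma drinfeld_B (hanti : ∀ x y : A, S (x * y) = S y * S x) (hone : S 1 = 1)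
    (hS : IsAntipode Δ ε S)
    (hcoassoc : ∀ a : A, deltaId A Δ (Δ a) = idDelta A Δ (Δ a))
    (hcounit2 : ∀ a : A, idEps A ε (Δ a) = a)
    (R : A ⊗[ℂ] A) (hint : ∀ a : A, R * Δ a = tensorFlip A (Δ a) * R) (x : A) :
    x * vOf S R = vOf S R * S (S x) := by
  have t12 := T12 Δ R hint x
  have hL := LinearMap.congr_fun (GB1 (A := A) S hanti)
    (R ⊗ₜ[ℂ] (deltaId A Δ (Δ x)))
  have hR := LinearMap.congr_fun (GB2 (A := A) S hanti)
    ((deltaId A Δ (Δ x)) ⊗ₜ[ℂ] R)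
  simp only [LinearMap.comp_apply, TensorProduct.map_tmul, AlgHom.toLinearMap_apply,
    LinearMap.mul'_apply, LinearMap.id_coe, id_eq] at hL hR
  rw [C_right Δ ε S hS hcoassoc hcounit2 x] at hL
  rw [C_rightS Δ ε S hS hcoassoc hcounit2 x] at hR
  have hu1 := LinearMap.congr_fun (br1 (A := A) S x) R
  have hu2 := LinearMap.congr_fun (br2 (A := A) S hone x) R
  simp only [LinearMap.comp_apply, LinearMap.flip_apply, TensorProduct.mk_apply,
    LinearMap.mulRight_apply, LinearMap.mulLeft_apply] at hu1 hu2
  rw [hu1] at hL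
  rw [hu2] at hR
  rw [← hL, ← hR, t12]

/-- Contract `id ⊗ ε ⊗ id` on three legs. -/
def Om : (A ⊗[ℂ] A) ⊗[ℂ] A →ₐ[ℂ] A ⊗[ℂ] A :=
  Algebra.TensorProduct.map (idEps A ε) (AlgHom.id ℂ A)

lemma Om_deltaId (hcounit2 : ∀ a : A, idEps A ε (Δ a) = a) (t : A ⊗[ℂ] A) :
    Om ε (deltaId A Δ t) = t := by
  have key : (Om (A := A) ε).toLinearMap ∘ₗ (deltaId A Δ).toLinearMap = LinearMap.id := by
    apply TensorProduct.ext'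
    intro a b
    simp only [LinearMap.comp_apply, AlgHom.toLinearMap_apply, LinearMap.id_coe, id_eq]
    have h1 : deltaId A Δ (a ⊗ₜ[ℂ] b) = (Δ a) ⊗ₜ[ℂ] b := by simp [deltaId]
    rw [h1]
    have h2 : Om (A := A) ε ((Δ a) ⊗ₜ[ℂ] b) = (idEps A ε (Δ a)) ⊗ₜ[ℂ] b := by
      simp [Om]
    rw [h2, hcounit2]
  exact LinearMap.congr_fun key t

lemma Om_leg13 (t : A ⊗[ℂ] A) : Om ε (leg13 A t) = t := by
  have key : (Om (A := A) ε).toLinearMap ∘ₗ (leg13 A).toLinearMap = LinearMap.id := by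
    apply TensorProduct.ext'
    intro a b
    simp [Om, leg13, idEps]
  exact LinearMap.congr_fun key t

lemma Om_leg23 (t : A ⊗[ℂ] A) : Om ε (leg23 A t) = (1 : A) ⊗ₜ[ℂ] (epsId A ε t) := by
  have key : (Om (A := A) ε).toLinearMap ∘ₗ (leg23 A).toLinearMap =
      (TensorProduct.mk ℂ A A 1) ∘ₗ (epsId A ε).toLinearMap := by
    apply TensorProduct.ext'
    intro a b
    simp only [LinearMap.comp_apply, AlgHom.toLinearMap_apply, TensorProduct.mk_apply]
    have h1 : leg23 A (a ⊗ₜ[ℂ] b) = ((1 : A) ⊗ₜ[ℂ] a) ⊗ₜ[ℂ] b := by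
      simp [leg23, algAssoc_symm_eq]
    rw [h1]
    have h2 : Om (A := A) ε (((1 : A) ⊗ₜ[ℂ] a) ⊗ₜ[ℂ] b) =
        (idEps A ε ((1 : A) ⊗ₜ[ℂ] a)) ⊗ₜ[ℂ] b := by simp [Om]
    rw [h2]
    have h3 : idEps A ε ((1 : A) ⊗ₜ[ℂ] a) = ε a • 1 := by simp [idEps]
    have h4 : epsId A ε (a ⊗ₜ[ℂ] b) = ε a • b := by simp [epsId]
    rw [h3, h4, TensorProduct.smul_tmul]
  exact LinearMap.congr_fun key t

lemma epsId_one_tmul (t : A) : epsId A ε ((1 : A) ⊗ₜ[ℂ] t) = t := by simp [epsId]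
lemma idEps_tmul_one (t : A) : idEps A ε (t ⊗ₜ[ℂ] (1 : A)) = t := by simp [idEps]

lemma epsId_R_one (hcounit2 : ∀ a : A, idEps A ε (Δ a) = a)
    (R Rinv : A ⊗[ℂ] A) (hR2 : Rinv * R = 1)
    (hhex1 : deltaId A Δ R = leg13 A R * leg23 A R) :
    epsId A ε R = 1 := by
  have h2 := congrArg (Om (A := A) ε) hhex1
  rw [map_mul, Om_deltaId Δ ε hcounit2, Om_leg13, Om_leg23] at h2
  have h3 : (1 : A ⊗[ℂ] A) = (1 : A) ⊗ₜ[ℂ] (epsId A ε R) := by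
    calc (1 : A ⊗[ℂ] A) = Rinv * R := hR2.symm
    _ = Rinv * (R * ((1 : A) ⊗ₜ[ℂ] (epsId A ε R))) := by rw [← h2]
    _ = (Rinv * R) * ((1 : A) ⊗ₜ[ℂ] (epsId A ε R)) := by rw [mul_assoc]
    _ = (1 : A) ⊗ₜ[ℂ] (epsId A ε R) := by rw [hR2, one_mul]
  have h4 := congrArg (epsId A ε) h3
  rw [map_one, epsId_one_tmul] at h4
  exact h4.symm

/-- Contract `id ⊗ id ⊗ ε` on three legs. -/
def Om3 : (A ⊗[ℂ] A) ⊗[ℂ] A →ₐ[ℂ] A ⊗[ℂ] A :=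
  (Algebra.TensorProduct.rid ℂ ℂ (A ⊗[ℂ] A)).toAlgHom.comp
    (Algebra.TensorProduct.map (AlgHom.id ℂ (A ⊗[ℂ] A)) ε)

lemma Om3_assoc_symm (W : A ⊗[ℂ] (A ⊗[ℂ] A)) :
    Om3 ε ((TensorProduct.assoc ℂ A A A).symm W) =
      TensorProduct.map LinearMap.id (idEps A ε).toLinearMap W := by
  have key : (Om3 (A := A) ε).toLinearMap ∘ₗ (TensorProduct.assoc ℂ A A A).symm.toLinearMap =
      TensorProduct.map LinearMap.id (idEps A ε).toLinearMap := by
    ext a b c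
    simp only [TensorProduct.AlgebraTensorModule.curry_apply, TensorProduct.curry_apply,
      LinearMap.coe_restrictScalars, LinearMap.comp_apply, LinearEquiv.coe_coe,
      TensorProduct.assoc_symm_tmul, AlgHom.toLinearMap_apply, TensorProduct.map_tmul,
      LinearMap.id_coe, id_eq]
    have h1 : Om3 (A := A) ε ((a ⊗ₜ[ℂ] b) ⊗ₜ[ℂ] c) = ε c • (a ⊗ₜ[ℂ] b) := by
      simp [Om3, Algebra.TensorProduct.rid_tmul]
    have h2 : idEps A ε (b ⊗ₜ[ℂ] c) = ε c • b := by simp [idEps]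
    rw [h1, h2, TensorProduct.tmul_smul]
  exact LinearMap.congr_fun key W

lemma Om3_idDelta (hcounit2 : ∀ a : A, idEps A ε (Δ a) = a) (t : A ⊗[ℂ] A) :
    Om3 ε (idDelta A Δ t) = t := by
  rw [idDelta_eq, Om3_assoc_symm, map_map_right]
  have : (idEps A ε).toLinearMap ∘ₗ Δ.toLinearMap = LinearMap.id :=
    LinearMap.ext fun a => hcounit2 a
  rw [this]
  simp [TensorProduct.map_id]

lemma Om3_leg13 (t : A ⊗[ℂ] A) : Om3 ε (leg13 A t) = (idEps A ε t) ⊗ₜ[ℂ] (1 : A) := by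
  have key : (Om3 (A := A) ε).toLinearMap ∘ₗ (leg13 A).toLinearMap =
      ((TensorProduct.mk ℂ A A).flip 1) ∘ₗ (idEps A ε).toLinearMap := by
    apply TensorProduct.ext'
    intro a b
    simp only [LinearMap.comp_apply, AlgHom.toLinearMap_apply, LinearMap.flip_apply,
      TensorProduct.mk_apply]
    have h1 : leg13 A (a ⊗ₜ[ℂ] b) = (a ⊗ₜ[ℂ] (1 : A)) ⊗ₜ[ℂ] b := by simp [leg13]
    rw [h1]
    have h2 : Om3 (A := A) ε ((a ⊗ₜ[ℂ] (1 : A)) ⊗ₜ[ℂ] b) = ε b • (a ⊗ₜ[ℂ] (1 : A)) := by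
      simp [Om3, Algebra.TensorProduct.rid_tmul]
    have h3 : idEps A ε (a ⊗ₜ[ℂ] b) = ε b • a := by simp [idEps]
    rw [h2, h3, TensorProduct.smul_tmul']
  exact LinearMap.congr_fun key t

lemma Om3_leg12 (t : A ⊗[ℂ] A) : Om3 ε (leg12 A t) = t := by
  have key : (Om3 (A := A) ε).toLinearMap ∘ₗ (leg12 A).toLinearMap = LinearMap.id := by
    apply TensorProduct.ext'
    intro a b
    have h1 : leg12 A (a ⊗ₜ[ℂ] b) = (a ⊗ₜ[ℂ] b) ⊗ₜ[ℂ] (1 : A) := rfl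
    simp only [LinearMap.comp_apply, AlgHom.toLinearMap_apply, LinearMap.id_coe, id_eq, h1]
    simp [Om3, Algebra.TensorProduct.rid_tmul]
  exact LinearMap.congr_fun key t

lemma idEps_R_one (hcounit2 : ∀ a : A, idEps A ε (Δ a) = a)
    (R Rinv : A ⊗[ℂ] A) (hR1 : R * Rinv = 1)
    (hhex2 : idDelta A Δ R = leg13 A R * leg12 A R) :
    idEps A ε R = 1 := by
  have h2 := congrArg (Om3 (A := A) ε) hhex2
  rw [map_mul, Om3_idDelta Δ ε hcounit2, Om3_leg13, Om3_leg12] at h2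
  have h3 : (1 : A ⊗[ℂ] A) = (idEps A ε R) ⊗ₜ[ℂ] (1 : A) := by
    calc (1 : A ⊗[ℂ] A) = R * Rinv := hR1.symm
    _ = ((idEps A ε R) ⊗ₜ[ℂ] (1 : A)) * (R * Rinv) := by
        conv_lhs => rw [h2]
        rw [mul_assoc]
    _ = (idEps A ε R) ⊗ₜ[ℂ] (1 : A) := by rw [hR1, mul_one]
  have h4 := congrArg (idEps A ε) h3
  rw [map_one, idEps_tmul_one] at h4
  exact h4.symm

/-- `(y⊗z)⊗w ↦ (z * S w) * y`. -/
def Lam : (A ⊗[ℂ] A) ⊗[ℂ] A →ₗ[ℂ] A :=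
  LinearMap.mul' ℂ A ∘ₗ
    TensorProduct.map (LinearMap.mul' ℂ A ∘ₗ TensorProduct.map LinearMap.id S) LinearMap.id ∘ₗ
    (TensorProduct.comm ℂ A (A ⊗[ℂ] A)).toLinearMap ∘ₗ
    (TensorProduct.assoc ℂ A A A).toLinearMap

lemma Lam_tmul (y z w : A) : Lam S ((y ⊗ₜ[ℂ] z) ⊗ₜ[ℂ] w) = (z * S w) * y := by
  simp only [Lam, LinearMap.comp_apply, LinearEquiv.coe_coe, TensorProduct.assoc_tmul,
    TensorProduct.comm_tmul, TensorProduct.map_tmul, LinearMap.mul'_apply,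
    LinearMap.id_coe, id_eq]

lemma Lam_idDelta (hS : IsAntipode Δ ε S) (t : A ⊗[ℂ] A) :
    Lam S (idDelta A Δ t) = idEps A ε t := by
  rw [idDelta_eq]
  have h0 : ∀ W : A ⊗[ℂ] (A ⊗[ℂ] A), Lam S ((TensorProduct.assoc ℂ A A A).symm W) =
      (LinearMap.mul' ℂ A ∘ₗ
        TensorProduct.map (LinearMap.mul' ℂ A ∘ₗ TensorProduct.map LinearMap.id S)
          LinearMap.id ∘ₗ (TensorProduct.comm ℂ A (A ⊗[ℂ] A)).toLinearMap) W := by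
    intro W
    simp only [Lam, LinearMap.comp_apply, LinearEquiv.coe_coe,
      LinearEquiv.apply_symm_apply]
  rw [h0]
  have key : (LinearMap.mul' ℂ A ∘ₗ
      TensorProduct.map (LinearMap.mul' ℂ A ∘ₗ TensorProduct.map LinearMap.id S)
        LinearMap.id ∘ₗ (TensorProduct.comm ℂ A (A ⊗[ℂ] A)).toLinearMap) ∘ₗ
      TensorProduct.map LinearMap.id Δ.toLinearMap = (idEps A ε).toLinearMap := by
    apply TensorProduct.ext'
    intro a b
    simp only [LinearMap.comp_apply, TensorProduct.map_tmul, LinearMap.id_coe, id_eq,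
      LinearEquiv.coe_coe, TensorProduct.comm_tmul, AlgHom.toLinearMap_apply,
      LinearMap.mul'_apply]
    rw [hS.2 b]
    have : idEps A ε (a ⊗ₜ[ℂ] b) = ε b • a := by simp [idEps]
    rw [this, Algebra.smul_def]
  exact LinearMap.congr_fun key t

/-- `(p⊗q)⊗t ↦ q * (t * p)`. -/
def kap : (A ⊗[ℂ] A) ⊗[ℂ] A →ₗ[ℂ] A :=
  LinearMap.mul' ℂ A ∘ₗ
    TensorProduct.map LinearMap.id
      (LinearMap.mul' ℂ A ∘ₗ (TensorProduct.comm ℂ A A).toLinearMap) ∘ₗ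
    (TensorProduct.assoc ℂ A A A).toLinearMap ∘ₗ
    TensorProduct.map (TensorProduct.comm ℂ A A).toLinearMap LinearMap.id

lemma kap_tmul (p q t : A) : kap ((p ⊗ₜ[ℂ] q) ⊗ₜ[ℂ] t) = q * (t * p) := by
  simp only [kap, LinearMap.comp_apply, LinearEquiv.coe_coe, TensorProduct.map_tmul,
    TensorProduct.comm_tmul, TensorProduct.assoc_tmul, LinearMap.mul'_apply,
    LinearMap.id_coe, id_eq]

lemma GK : Lam S ∘ₗ LinearMap.mul' ℂ ((A ⊗[ℂ] A) ⊗[ℂ] A) ∘ₗ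
      TensorProduct.map (leg13 A).toLinearMap (leg12 A).toLinearMap =
    kap ∘ₗ TensorProduct.map LinearMap.id (uOf S) ∘ₗ
      (TensorProduct.comm ℂ (A ⊗[ℂ] A) (A ⊗[ℂ] A)).toLinearMap := by
  ext a b p q
  simp only [TensorProduct.AlgebraTensorModule.curry_apply, TensorProduct.curry_apply,
    LinearMap.coe_restrictScalars, LinearMap.comp_apply, TensorProduct.map_tmul,
    AlgHom.toLinearMap_apply, LinearMap.mul'_apply, LinearMap.id_coe, id_eq,
    LinearEquiv.coe_coe, TensorProduct.comm_tmul]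
  have h13 : leg13 A (a ⊗ₜ[ℂ] b) = (a ⊗ₜ[ℂ] (1 : A)) ⊗ₜ[ℂ] b := by simp [leg13]
  have h12 : leg12 A (p ⊗ₜ[ℂ] q) = (p ⊗ₜ[ℂ] q) ⊗ₜ[ℂ] (1 : A) := rfl
  rw [h13, h12, Algebra.TensorProduct.tmul_mul_tmul, Algebra.TensorProduct.tmul_mul_tmul,
    one_mul, mul_one, Lam_tmul, kap_tmul, uOf_tmul]
  simp [mul_assoc]

lemma K1 (hS : IsAntipode Δ ε S)
    (hcounit2 : ∀ a : A, idEps A ε (Δ a) = a)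
    (R Rinv : A ⊗[ℂ] A) (hR1 : R * Rinv = 1)
    (hhex2 : idDelta A Δ R = leg13 A R * leg12 A R)
    (hA : ∀ a : A, uOf S R * a = S (S a) * uOf S R) :
    vOf S R * uOf S R = 1 := by
  have hL := congrArg (Lam S) hhex2
  rw [Lam_idDelta Δ ε S hS, idEps_R_one Δ ε hcounit2 R Rinv hR1 hhex2] at hL
  have hGK := LinearMap.congr_fun (GK (A := A) S) (R ⊗ₜ[ℂ] R)
  simp only [LinearMap.comp_apply, TensorProduct.map_tmul, AlgHom.toLinearMap_apply,
    LinearMap.mul'_apply, LinearMap.id_coe, id_eq, LinearEquiv.coe_coe,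
    TensorProduct.comm_tmul] at hGK
  rw [hGK] at hL
  -- hL : 1 = kap (R ⊗ₜ uOf S R) ; now rewrite kap (X ⊗ u) = vOf X * u
  have key : kap ∘ₗ ((TensorProduct.mk ℂ (A ⊗[ℂ] A) A).flip (uOf S R)) =
      LinearMap.mulRight ℂ (uOf S R) ∘ₗ vOf S := by
    apply TensorProduct.ext'
    intro a b
    simp only [LinearMap.comp_apply, LinearMap.flip_apply, TensorProduct.mk_apply,
      LinearMap.mulRight_apply, vOf_tmul, kap_tmul]
    rw [hA a]
    simp [mul_assoc]
  have hk := LinearMap.congr_fun key R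
  simp only [LinearMap.comp_apply, LinearMap.flip_apply, TensorProduct.mk_apply,
    LinearMap.mulRight_apply] at hk
  rw [hk] at hL
  exact hL.symm

lemma contract12_deltaId (hS : IsAntipode Δ ε S) (t : A ⊗[ℂ] A) :
    contract12 S (deltaId A Δ t) = (1 : A) ⊗ₜ[ℂ] (epsId A ε t) := by
  rw [deltaId_eq]
  unfold contract12
  rw [map_map_left, psi1_Delta_eq Δ ε S hS, mapEta_left, rhoL_eq_epsId]
  rfl

/-- `(y⊗z)⊗w ↦ (y * S z) ⊗ w`. -/
def contract12b : (A ⊗[ℂ] A) ⊗[ℂ] A →ₗ[ℂ] A ⊗[ℂ] A :=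
  TensorProduct.map (LinearMap.mul' ℂ A ∘ₗ TensorProduct.map LinearMap.id S) LinearMap.id

lemma contract12b_deltaId (hS : IsAntipode Δ ε S) (t : A ⊗[ℂ] A) :
    contract12b S (deltaId A Δ t) = (1 : A) ⊗ₜ[ℂ] (epsId A ε t) := by
  rw [deltaId_eq]
  unfold contract12b
  rw [map_map_left, idS_Delta_eq Δ ε S hS, mapEta_left, rhoL_eq_epsId]
  rfl

lemma GI1 : contract12 S ∘ₗ LinearMap.mul' ℂ ((A ⊗[ℂ] A) ⊗[ℂ] A) ∘ₗ
      TensorProduct.map (leg13 A).toLinearMap (leg23 A).toLinearMap =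
    LinearMap.mul' ℂ (A ⊗[ℂ] A) ∘ₗ
      TensorProduct.map (TensorProduct.map S LinearMap.id) LinearMap.id := by
  ext a b p q
  simp only [TensorProduct.AlgebraTensorModule.curry_apply, TensorProduct.curry_apply,
    LinearMap.coe_restrictScalars, LinearMap.comp_apply, TensorProduct.map_tmul,
    AlgHom.toLinearMap_apply, LinearMap.mul'_apply, LinearMap.id_coe, id_eq]
  have h13 : leg13 A (a ⊗ₜ[ℂ] b) = (a ⊗ₜ[ℂ] (1 : A)) ⊗ₜ[ℂ] b := by simp [leg13]
  have h23 : leg23 A (p ⊗ₜ[ℂ] q) = ((1 : A) ⊗ₜ[ℂ] p) ⊗ₜ[ℂ] q := by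
    simp [leg23, algAssoc_symm_eq]
  rw [h13, h23, Algebra.TensorProduct.tmul_mul_tmul, Algebra.TensorProduct.tmul_mul_tmul,
    one_mul, mul_one]
  simp only [contract12, psi1, TensorProduct.map_tmul, LinearMap.comp_apply,
    LinearMap.mul'_apply, LinearMap.id_coe, id_eq, Algebra.TensorProduct.tmul_mul_tmul]

lemma GI2 : contract12b S ∘ₗ LinearMap.mul' ℂ ((A ⊗[ℂ] A) ⊗[ℂ] A) ∘ₗ
      TensorProduct.map (leg13 A).toLinearMap (leg23 A).toLinearMap =
    LinearMap.mul' ℂ (A ⊗[ℂ] A) ∘ₗ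
      TensorProduct.map LinearMap.id (TensorProduct.map S LinearMap.id) := by
  ext a b p q
  simp only [TensorProduct.AlgebraTensorModule.curry_apply, TensorProduct.curry_apply,
    LinearMap.coe_restrictScalars, LinearMap.comp_apply, TensorProduct.map_tmul,
    AlgHom.toLinearMap_apply, LinearMap.mul'_apply, LinearMap.id_coe, id_eq]
  have h13 : leg13 A (a ⊗ₜ[ℂ] b) = (a ⊗ₜ[ℂ] (1 : A)) ⊗ₜ[ℂ] b := by simp [leg13]
  have h23 : leg23 A (p ⊗ₜ[ℂ] q) = ((1 : A) ⊗ₜ[ℂ] p) ⊗ₜ[ℂ] q := by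
    simp [leg23, algAssoc_symm_eq]
  rw [h13, h23, Algebra.TensorProduct.tmul_mul_tmul, Algebra.TensorProduct.tmul_mul_tmul,
    one_mul, mul_one]
  simp only [contract12b, TensorProduct.map_tmul, LinearMap.comp_apply,
    LinearMap.mul'_apply, LinearMap.id_coe, id_eq, Algebra.TensorProduct.tmul_mul_tmul]

lemma RS_eq_Rinv (hS : IsAntipode Δ ε S)
    (hcounit2 : ∀ a : A, idEps A ε (Δ a) = a)
    (R Rinv : A ⊗[ℂ] A) (hR1 : R * Rinv = 1) (hR2 : Rinv * R = 1)
    (hhex1 : deltaId A Δ R = leg13 A R * leg23 A R)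
    (hhex2 : idDelta A Δ R = leg13 A R * leg12 A R) :
    TensorProduct.map S LinearMap.id R = Rinv := by
  have heps : epsId A ε R = 1 := epsId_R_one Δ ε hcounit2 R Rinv hR2 hhex1
  have hI1 : TensorProduct.map S LinearMap.id R * R = 1 := by
    have h := congrArg (contract12 S) hhex1
    rw [contract12_deltaId Δ ε S hS, heps] at h
    have hgi := LinearMap.congr_fun (GI1 (A := A) S) (R ⊗ₜ[ℂ] R)
    simp only [LinearMap.comp_apply, TensorProduct.map_tmul, AlgHom.toLinearMap_apply,
      LinearMap.mul'_apply, LinearMap.id_coe, id_eq] at hgi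
    rw [hgi] at h
    rw [← h]
    exact (Algebra.TensorProduct.one_def).symm
  have hI2 : R * TensorProduct.map S LinearMap.id R = 1 := by
    have h := congrArg (contract12b S) hhex1
    rw [contract12b_deltaId Δ ε S hS, heps] at h
    have hgi := LinearMap.congr_fun (GI2 (A := A) S) (R ⊗ₜ[ℂ] R)
    simp only [LinearMap.comp_apply, TensorProduct.map_tmul, AlgHom.toLinearMap_apply,
      LinearMap.mul'_apply, LinearMap.id_coe, id_eq] at hgi
    rw [hgi] at h
    rw [← h]
    exact (Algebra.TensorProduct.one_def).symm
  calc TensorProduct.map S LinearMap.id R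
      = TensorProduct.map S LinearMap.id R * (R * Rinv) := by rw [hR1, mul_one]
    _ = (TensorProduct.map S LinearMap.id R * R) * Rinv := by rw [mul_assoc]
    _ = Rinv := by rw [hI1, one_mul]

lemma hex2_inv (R Rinv : A ⊗[ℂ] A) (hR1 : R * Rinv = 1) (hR2 : Rinv * R = 1)
    (hhex2 : idDelta A Δ R = leg13 A R * leg12 A R) :
    idDelta A Δ Rinv = leg12 A Rinv * leg13 A Rinv := by
  have hZ : idDelta A Δ R * (leg12 A Rinv * leg13 A Rinv) = 1 := by
    rw [hhex2]
    calc leg13 A R * leg12 A R * (leg12 A Rinv * leg13 A Rinv)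
        = leg13 A R * (leg12 A R * leg12 A Rinv) * leg13 A Rinv := by
          rw [mul_assoc, mul_assoc, mul_assoc]
      _ = leg13 A R * leg13 A Rinv := by
          rw [← map_mul, hR1, map_one, mul_one]
      _ = 1 := by rw [← map_mul, hR1, map_one]
  calc idDelta A Δ Rinv
      = idDelta A Δ Rinv * (idDelta A Δ R * (leg12 A Rinv * leg13 A Rinv)) := by
        rw [hZ, mul_one]
    _ = (idDelta A Δ Rinv * idDelta A Δ R) * (leg12 A Rinv * leg13 A Rinv) := by
        rw [mul_assoc]
    _ = leg12 A Rinv * leg13 A Rinv := by rw [← map_mul, hR2, map_one, one_mul]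

lemma contract23_idDelta (hS : IsAntipode Δ ε S) (t : A ⊗[ℂ] A) :
    contract23 S (idDelta A Δ t) = (idEps A ε t) ⊗ₜ[ℂ] (1 : A) := by
  rw [idDelta_eq]
  unfold contract23
  simp only [LinearMap.comp_apply, LinearEquiv.coe_coe, LinearEquiv.apply_symm_apply]
  rw [map_map_right, idS_Delta_eq Δ ε S hS, mapEta_right, rhoR_eq_idEps]
  rfl

lemma GJ4 : contract23 S ∘ₗ LinearMap.mul' ℂ ((A ⊗[ℂ] A) ⊗[ℂ] A) ∘ₗ
      TensorProduct.map (leg12 A).toLinearMap (leg13 A).toLinearMap =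
    LinearMap.mul' ℂ (A ⊗[ℂ] A) ∘ₗ
      TensorProduct.map LinearMap.id (TensorProduct.map LinearMap.id S) := by
  ext a b p q
  simp only [TensorProduct.AlgebraTensorModule.curry_apply, TensorProduct.curry_apply,
    LinearMap.coe_restrictScalars, LinearMap.comp_apply, TensorProduct.map_tmul,
    AlgHom.toLinearMap_apply, LinearMap.mul'_apply, LinearMap.id_coe, id_eq]
  have h12 : leg12 A (a ⊗ₜ[ℂ] b) = (a ⊗ₜ[ℂ] b) ⊗ₜ[ℂ] (1 : A) := rfl
  have h13 : leg13 A (p ⊗ₜ[ℂ] q) = (p ⊗ₜ[ℂ] (1 : A)) ⊗ₜ[ℂ] q := by simp [leg13]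
  rw [h12, h13, Algebra.TensorProduct.tmul_mul_tmul, Algebra.TensorProduct.tmul_mul_tmul,
    mul_one, one_mul]
  simp only [contract23, LinearMap.comp_apply, LinearEquiv.coe_coe,
    TensorProduct.assoc_tmul, TensorProduct.map_tmul, LinearMap.mul'_apply,
    LinearMap.id_coe, id_eq, Algebra.TensorProduct.tmul_mul_tmul]

lemma idS_Rinv_eq_R (hS : IsAntipode Δ ε S)
    (hcounit2 : ∀ a : A, idEps A ε (Δ a) = a)
    (R Rinv : A ⊗[ℂ] A) (hR1 : R * Rinv = 1) (hR2 : Rinv * R = 1)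
    (hhex2 : idDelta A Δ R = leg13 A R * leg12 A R) :
    TensorProduct.map LinearMap.id S Rinv = R := by
  have hR : idEps A ε R = 1 := idEps_R_one Δ ε hcounit2 R Rinv hR1 hhex2
  have hRinv : idEps A ε Rinv = 1 := by
    have := congrArg (idEps A ε) hR1
    rw [map_mul, map_one, hR, one_mul] at this
    exact this
  have hhexinv := hex2_inv Δ R Rinv hR1 hR2 hhex2
  have h := congrArg (contract23 S) hhexinv
  rw [contract23_idDelta Δ ε S hS, hRinv] at h
  have hgj := LinearMap.congr_fun (GJ4 (A := A) S) (Rinv ⊗ₜ[ℂ] Rinv)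
  simp only [LinearMap.comp_apply, TensorProduct.map_tmul, AlgHom.toLinearMap_apply,
    LinearMap.mul'_apply, LinearMap.id_coe, id_eq] at hgj
  rw [hgj] at h
  have hJ4 : Rinv * TensorProduct.map LinearMap.id S Rinv = 1 := by
    rw [← h]
    exact (Algebra.TensorProduct.one_def).symm
  calc TensorProduct.map LinearMap.id S Rinv
      = (R * Rinv) * TensorProduct.map LinearMap.id S Rinv := by rw [hR1, one_mul]
    _ = R * (Rinv * TensorProduct.map LinearMap.id S Rinv) := by rw [mul_assoc]
    _ = R := by rw [hJ4, mul_one]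

lemma mapSS_R_eq_R (hS : IsAntipode Δ ε S)
    (hcounit2 : ∀ a : A, idEps A ε (Δ a) = a)
    (R Rinv : A ⊗[ℂ] A) (hR1 : R * Rinv = 1) (hR2 : Rinv * R = 1)
    (hhex1 : deltaId A Δ R = leg13 A R * leg23 A R)
    (hhex2 : idDelta A Δ R = leg13 A R * leg12 A R) :
    TensorProduct.map S S R = R := by
  have h1 : TensorProduct.map S S R =
      TensorProduct.map LinearMap.id S (TensorProduct.map S LinearMap.id R) := by
    have : TensorProduct.map S S =
        (TensorProduct.map LinearMap.id S) ∘ₗ (TensorProduct.map S LinearMap.id) := by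
      rw [← TensorProduct.map_comp, LinearMap.id_comp, LinearMap.comp_id]
    rw [this]; rfl
  rw [h1, RS_eq_Rinv Δ ε S hS hcounit2 R Rinv hR1 hR2 hhex1 hhex2,
    idS_Rinv_eq_R Δ ε S hS hcounit2 R Rinv hR1 hR2 hhex2]

lemma SSu_eq_u (hanti : ∀ x y : A, S (x * y) = S y * S x)
    (hS : IsAntipode Δ ε S)
    (hcounit2 : ∀ a : A, idEps A ε (Δ a) = a)
    (R Rinv : A ⊗[ℂ] A) (hR1 : R * Rinv = 1) (hR2 : Rinv * R = 1)
    (hhex1 : deltaId A Δ R = leg13 A R * leg23 A R)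
    (hhex2 : idDelta A Δ R = leg13 A R * leg12 A R) :
    S (S (uOf S R)) = uOf S R := by
  have uS1 : ∀ t : A ⊗[ℂ] A, S (uOf S t) =
      LinearMap.mul' ℂ A (TensorProduct.map S (S ∘ₗ S) t) := by
    intro t
    have key : S ∘ₗ uOf S = LinearMap.mul' ℂ A ∘ₗ TensorProduct.map S (S ∘ₗ S) := by
      apply TensorProduct.ext'
      intro a b
      simp only [LinearMap.comp_apply, uOf_tmul, TensorProduct.map_tmul,
        LinearMap.mul'_apply]
      rw [hanti (S b) a]
    exact LinearMap.congr_fun key t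
  have uS2 : ∀ t : A ⊗[ℂ] A, S (LinearMap.mul' ℂ A (TensorProduct.map S (S ∘ₗ S) t)) =
      uOf S (TensorProduct.map (S ∘ₗ S) (S ∘ₗ S) t) := by
    intro t
    have key : S ∘ₗ (LinearMap.mul' ℂ A ∘ₗ TensorProduct.map S (S ∘ₗ S)) =
        uOf S ∘ₗ TensorProduct.map (S ∘ₗ S) (S ∘ₗ S) := by
      apply TensorProduct.ext'
      intro a b
      simp only [LinearMap.comp_apply, TensorProduct.map_tmul, LinearMap.mul'_apply,
        uOf_tmul]
      rw [hanti (S a) (S (S b))]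
    exact LinearMap.congr_fun key t
  have hSSR : TensorProduct.map (S ∘ₗ S) (S ∘ₗ S) R = R := by
    have : TensorProduct.map (S ∘ₗ S) (S ∘ₗ S) =
        (TensorProduct.map S S) ∘ₗ (TensorProduct.map S S) := by
      rw [← TensorProduct.map_comp]
    rw [this, LinearMap.comp_apply,
      mapSS_R_eq_R Δ ε S hS hcounit2 R Rinv hR1 hR2 hhex1 hhex2,
      mapSS_R_eq_R Δ ε S hS hcounit2 R Rinv hR1 hR2 hhex1 hhex2]
  rw [uS1, uS2, hSSR]

end QT

theorem drinfeld_element_inner_square_antipode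
    (Δ : A →ₐ[ℂ] A ⊗[ℂ] A) (ε : A →ₐ[ℂ] ℂ) (S : A →ₗ[ℂ] A)
    (hcoassoc : ∀ a : A, deltaId A Δ (Δ a) = idDelta A Δ (Δ a))
    (hcounit1 : ∀ a : A, epsId A ε (Δ a) = a)
    (hcounit2 : ∀ a : A, idEps A ε (Δ a) = a)
    (hS : IsAntipode Δ ε S)
    (R Rinv : A ⊗[ℂ] A) (hR1 : R * Rinv = 1) (hR2 : Rinv * R = 1)
    (hint : ∀ a : A, R * Δ a = tensorFlip A (Δ a) * R)
    (hhex1 : deltaId A Δ R = leg13 A R * leg23 A R)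
    (hhex2 : idDelta A Δ R = leg13 A R * leg12 A R) :
    ∃ uinv : A,
      (LinearMap.mul' ℂ A (TensorProduct.map S LinearMap.id (tensorFlip A R))) * uinv = 1 ∧
      uinv * (LinearMap.mul' ℂ A (TensorProduct.map S LinearMap.id (tensorFlip A R))) = 1 ∧
      ∀ x : A, S (S x) =
        (LinearMap.mul' ℂ A (TensorProduct.map S LinearMap.id (tensorFlip A R))) * x * uinv := by
  have hu : LinearMap.mul' ℂ A (TensorProduct.map S LinearMap.id (tensorFlip A R)) =
      uOf S R := rfl
  have hanti := antipode_antimul Δ ε S hcoassoc hcounit1 hcounit2 hS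
  have hone := antipode_one Δ ε S hS
  have hA : ∀ a : A, uOf S R * a = S (S a) * uOf S R := fun a =>
    drinfeld_A Δ ε S hanti hone hS hcoassoc hcounit1 hcounit2 R hint a
  have hB : ∀ a : A, a * vOf S R = vOf S R * S (S a) := fun a =>
    drinfeld_B Δ ε S hanti hone hS hcoassoc hcounit2 R hint a
  have hvu : vOf S R * uOf S R = 1 := K1 Δ ε S hS hcounit2 R Rinv hR1 hhex2 hA
  have hssu := SSu_eq_u Δ ε S hanti hS hcounit2 R Rinv hR1 hR2 hhex1 hhex2
  have huv : uOf S R * vOf S R = 1 := by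
    calc uOf S R * vOf S R = vOf S R * S (S (uOf S R)) := hB _
    _ = vOf S R * uOf S R := by rw [hssu]
    _ = 1 := hvu
  refine ⟨vOf S R, ?_, ?_, ?_⟩
  · rw [hu]; exact huv
  · rw [hu]; exact hvu
  · intro x
    rw [hu]
    calc S (S x) = S (S x) * 1 := (mul_one _).symm
    _ = S (S x) * (uOf S R * vOf S R) := by rw [huv]
    _ = (S (S x) * uOf S R) * vOf S R := by rw [mul_assoc]
    _ = (uOf S R * x) * vOf S R := by rw [← hA x]
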